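/- Let γ, λ₁, …, λ₉ be real numbers and let f : ℝ² → ℝ be the polynomial f(x,y) = (1/3)(x − γy²)(x² + y⁴) + λ₁ + λ₂y + λ₃y² + λ₄y³ + λ₅y⁴ + λ₆x + λ₇xy + λ₈xy² + λ₉(x² + 3y⁴)y. Let G : ℝ² → ℝ² be the map G(x,y) = (ax + by + cy² + ξ, dy + η) with a > 0 and d > 0. If there exist real numbers γ', λ'₁, …, λ'₉ such that (f ∘ G)(x,y) = (1/3)(x − γ'y²)(x² + y⁴) + λ'₁ + λ'₂y + λ'₃y² + λ'₄y³ + λ'₅y⁴ + λ'₆x + λ'₇xy + λ'₈xy² + λ'₉(x² + 3y⁴)y for all (x,y) ∈ ℝ², then a = d = 1 and b = c = ξ = η = 0, i.e. G is the identity map (and consequently γ' = γ and λ'ᵢ = λᵢ for all i). -/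
import Mathlib

/-- The canonical versal deformation of the real singularity class `J₁₀¹`:
`(1/3)(x − γy²)(x² + y⁴) + λ₁ + λ₂y + λ₃y² + λ₄y³ + λ₅y⁴ + λ₆x + λ₇xy + λ₈xy²
  + λ₉(x² + 3y⁴)y`. -/
noncomputable def vers1 (γ l1 l2 l3 l4 l5 l6 l7 l8 l9 x y : ℝ) : ℝ :=
  (1 / 3) * (x - γ * y ^ 2) * (x ^ 2 + y ^ 4) + l1 + l2 * y + l3 * y ^ 2 + l4 * y ^ 3 +
      l5 * y ^ 4 + l6 * x + l7 * x * y + l8 * x * y ^ 2 + l9 * (x ^ 2 + 3 * y ^ 4) * y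

set_option maxHeartbeats 4000000 in
/-- If a coordinate change `G(x,y) = (ax + by + cy² + ξ, dy + η)` with `a > 0`, `d > 0`
maps one member of the canonical versal deformation of `J₁₀¹` to another (i.e. `f ∘ G`
again has the canonical form), then `G` is the identity map, and the parameters
coincide. -/
theorem vers1_orbit_unique
    (γ l1 l2 l3 l4 l5 l6 l7 l8 l9 : ℝ)
    (γ' l1' l2' l3' l4' l5' l6' l7' l8' l9' : ℝ)
    (a b c d ξ η : ℝ) (ha : 0 < a) (hd : 0 < d)
    (h : ∀ x y : ℝ,
      vers1 γ l1 l2 l3 l4 l5 l6 l7 l8 l9 (a * x + b * y + c * y ^ 2 + ξ) (d * y + η)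
        = vers1 γ' l1' l2' l3' l4' l5' l6' l7' l8' l9' x y) :
    a = 1 ∧ d = 1 ∧ b = 0 ∧ c = 0 ∧ ξ = 0 ∧ η = 0 ∧
      (∀ x y : ℝ, (a * x + b * y + c * y ^ 2 + ξ, d * y + η) = (x, y)) ∧
      γ' = γ ∧ l1' = l1 ∧ l2' = l2 ∧ l3' = l3 ∧ l4' = l4 ∧ l5' = l5 ∧
      l6' = l6 ∧ l7' = l7 ∧ l8' = l8 ∧ l9' = l9 := by
  simp only [vers1] at h
  have C30 : -(1/3) + (1/3)*a^3 = 0 := by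
    linear_combination (-1/6) * h 0 0 + (1/2) * h 1 0 + (-1/2) * h 2 0 + (1/6) * h 3 0
  have C14 : -(1/3) + (1/3)*a*d^4 - (2/3)*a*c*d^2*γ + a*c^2 = 0 := by
    linear_combination (11/864) * h 0 (-3) + (-11/72) * h 0 (-2) + (143/288) * h 0 (-1) + (-77/108) * h 0 0 + (143/288) * h 0 1 + (-11/72) * h 0 2 + (11/864) * h 0 3 + (-1/48) * h 1 (-3) + (1/4) * h 1 (-2) + (-13/16) * h 1 (-1) + (7/6) * h 1 0 + (-13/16) * h 1 1 + (1/4) * h 1 2 + (-1/48) * h 1 3 + (1/96) * h 2 (-3) + (-1/8) * h 2 (-2) + (13/32) * h 2 (-1) + (-7/12) * h 2 0 + (13/32) * h 2 1 + (-1/8) * h 2 2 + (1/96) * h 2 3 + (-1/432) * h 3 (-3) + (1/36) * h 3 (-2) + (-13/144) * h 3 (-1) + (7/54) * h 3 0 + (-13/144) * h 3 1 + (1/36) * h 3 2 + (-1/432) * h 3 3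
  have C22 : (1/3)*γ' - (1/3)*a^2*d^2*γ + a^2*c = 0 := by
    linear_combination (1/180) * h 0 (-3) + (-3/40) * h 0 (-2) + (3/4) * h 0 (-1) + (-49/36) * h 0 0 + (3/4) * h 0 1 + (-3/40) * h 0 2 + (1/180) * h 0 3 + (-1/72) * h 1 (-3) + (3/16) * h 1 (-2) + (-15/8) * h 1 (-1) + (245/72) * h 1 0 + (-15/8) * h 1 1 + (3/16) * h 1 2 + (-1/72) * h 1 3 + (1/90) * h 2 (-3) + (-3/20) * h 2 (-2) + (3/2) * h 2 (-1) + (-49/18) * h 2 0 + (3/2) * h 2 1 + (-3/20) * h 2 2 + (1/90) * h 2 3 + (-1/360) * h 3 (-3) + (3/80) * h 3 (-2) + (-3/8) * h 3 (-1) + (49/72) * h 3 0 + (-3/8) * h 3 1 + (3/80) * h 3 2 + (-1/360) * h 3 3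
  have C06 : (1/3)*γ' - (1/3)*d^6*γ + (1/3)*c*d^4 - (1/3)*c^2*d^2*γ + (1/3)*c^3 = 0 := by
    linear_combination (1/720) * h 0 (-3) + (-1/120) * h 0 (-2) + (1/48) * h 0 (-1) + (-1/36) * h 0 0 + (1/48) * h 0 1 + (-1/120) * h 0 2 + (1/720) * h 0 3
  have C21 : -l9' + a^2*d*l9 - (2/3)*a^2*d*η*γ + a^2*b = 0 := by
    linear_combination (-1/60) * h 0 (-3) + (3/20) * h 0 (-2) + (-3/4) * h 0 (-1) + (3/4) * h 0 1 + (-3/20) * h 0 2 + (1/60) * h 0 3 + (1/24) * h 1 (-3) + (-3/8) * h 1 (-2) + (15/8) * h 1 (-1) + (-15/8) * h 1 1 + (3/8) * h 1 2 + (-1/24) * h 1 3 + (-1/30) * h 2 (-3) + (3/10) * h 2 (-2) + (-3/2) * h 2 (-1) + (3/2) * h 2 1 + (-3/10) * h 2 2 + (1/30) * h 2 3 + (1/120) * h 3 (-3) + (-3/40) * h 3 (-2) + (3/8) * h 3 (-1) + (-3/8) * h 3 1 + (3/40) * h 3 2 + (-1/120) * h 3 3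
  have C05 : -(3)*l9' + (3)*d^5*l9 - (2)*d^5*η*γ + (4/3)*c*d^3*η + c^2*d*l9 - (2/3)*c^2*d*η*γ + (1/3)*b*d^4 - (2/3)*b*c*d^2*γ + b*c^2 = 0 := by
    linear_combination (-1/240) * h 0 (-3) + (1/60) * h 0 (-2) + (-1/48) * h 0 (-1) + (1/48) * h 0 1 + (-1/60) * h 0 2 + (1/240) * h 0 3
  have C13 : (4/3)*a*d^3*η + (2)*a*c*d*l9 - (4/3)*a*c*d*η*γ - (2/3)*a*b*d^2*γ + (2)*a*b*c = 0 := by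
    linear_combination (-11/288) * h 0 (-3) + (11/36) * h 0 (-2) + (-143/288) * h 0 (-1) + (143/288) * h 0 1 + (-11/36) * h 0 2 + (11/288) * h 0 3 + (1/16) * h 1 (-3) + (-1/2) * h 1 (-2) + (13/16) * h 1 (-1) + (-13/16) * h 1 1 + (1/2) * h 1 2 + (-1/16) * h 1 3 + (-1/32) * h 2 (-3) + (1/4) * h 2 (-2) + (-13/32) * h 2 (-1) + (13/32) * h 2 1 + (-1/4) * h 2 2 + (1/32) * h 2 3 + (1/144) * h 3 (-3) + (-1/18) * h 3 (-2) + (13/144) * h 3 (-1) + (-13/144) * h 3 1 + (1/18) * h 3 2 + (-1/144) * h 3 3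
  have C20 : a^2*η*l9 - (1/3)*a^2*η^2*γ + a^2*ξ = 0 := by
    linear_combination (1) * h 0 0 + (-5/2) * h 1 0 + (2) * h 2 0 + (-1/2) * h 3 0
  have C00 : -l1' + l1 + η*l2 + η^2*l3 + η^3*l4 + η^4*l5 + (3)*η^5*l9 - (1/3)*η^6*γ + ξ*l6 + ξ*η*l7 + ξ*η^2*l8 + (1/3)*ξ*η^4 + ξ^2*η*l9 - (1/3)*ξ^2*η^2*γ + (1/3)*ξ^3 = 0 := by
    linear_combination (1) * h 0 0
  have C01 : -l2' + d*l2 + (2)*d*η*l3 + (3)*d*η^2*l4 + (4)*d*η^3*l5 + (15)*d*η^4*l9 - (2)*d*η^5*γ + d*ξ*l7 + (2)*d*ξ*η*l8 + (4/3)*d*ξ*η^3 + d*ξ^2*l9 - (2/3)*d*ξ^2*η*γ + b*l6 + b*η*l7 + b*η^2*l8 + (1/3)*b*η^4 + (2)*b*ξ*η*l9 - (2/3)*b*ξ*η^2*γ + b*ξ^2 = 0 := by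
    linear_combination (-1/60) * h 0 (-3) + (3/20) * h 0 (-2) + (-3/4) * h 0 (-1) + (3/4) * h 0 1 + (-3/20) * h 0 2 + (1/60) * h 0 3
  have C02 : -l3' + d^2*l3 + (3)*d^2*η*l4 + (6)*d^2*η^2*l5 + (30)*d^2*η^3*l9 - (5)*d^2*η^4*γ + d^2*ξ*l8 + (2)*d^2*ξ*η^2 - (1/3)*d^2*ξ^2*γ + c*l6 + c*η*l7 + c*η^2*l8 + (1/3)*c*η^4 + (2)*c*ξ*η*l9 - (2/3)*c*ξ*η^2*γ + c*ξ^2 + b*d*l7 + (2)*b*d*η*l8 + (4/3)*b*d*η^3 + (2)*b*d*ξ*l9 - (4/3)*b*d*ξ*η*γ + b^2*η*l9 - (1/3)*b^2*η^2*γ + b^2*ξ = 0 := by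
    linear_combination (1/180) * h 0 (-3) + (-3/40) * h 0 (-2) + (3/4) * h 0 (-1) + (-49/36) * h 0 0 + (3/4) * h 0 1 + (-3/40) * h 0 2 + (1/180) * h 0 3
  have C03 : -l4' + d^3*l4 + (4)*d^3*η*l5 + (30)*d^3*η^2*l9 - (20/3)*d^3*η^3*γ + (4/3)*d^3*ξ*η + c*d*l7 + (2)*c*d*η*l8 + (4/3)*c*d*η^3 + (2)*c*d*ξ*l9 - (4/3)*c*d*ξ*η*γ + b*d^2*l8 + (2)*b*d^2*η^2 - (2/3)*b*d^2*ξ*γ + (2)*b*c*η*l9 - (2/3)*b*c*η^2*γ + (2)*b*c*ξ + b^2*d*l9 - (2/3)*b^2*d*η*γ + (1/3)*b^3 = 0 := by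
    linear_combination (1/48) * h 0 (-3) + (-1/6) * h 0 (-2) + (13/48) * h 0 (-1) + (-13/48) * h 0 1 + (1/6) * h 0 2 + (-1/48) * h 0 3
  have C04 : -l5' + d^4*l5 + (15)*d^4*η*l9 - (5)*d^4*η^2*γ + (1/3)*d^4*ξ + c*d^2*l8 + (2)*c*d^2*η^2 - (2/3)*c*d^2*ξ*γ + c^2*η*l9 - (1/3)*c^2*η^2*γ + c^2*ξ + (4/3)*b*d^3*η + (2)*b*c*d*l9 - (4/3)*b*c*d*η*γ - (1/3)*b^2*d^2*γ + b^2*c = 0 := by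
    linear_combination (-1/144) * h 0 (-3) + (1/12) * h 0 (-2) + (-13/48) * h 0 (-1) + (7/18) * h 0 0 + (-13/48) * h 0 1 + (1/12) * h 0 2 + (-1/144) * h 0 3
  have C10 : -l6' + a*l6 + a*η*l7 + a*η^2*l8 + (1/3)*a*η^4 + (2)*a*ξ*η*l9 - (2/3)*a*ξ*η^2*γ + a*ξ^2 = 0 := by
    linear_combination (-11/6) * h 0 0 + (3) * h 1 0 + (-3/2) * h 2 0 + (1/3) * h 3 0
  have C11 : -l7' + a*d*l7 + (2)*a*d*η*l8 + (4/3)*a*d*η^3 + (2)*a*d*ξ*l9 - (4/3)*a*d*ξ*η*γ + (2)*a*b*η*l9 - (2/3)*a*b*η^2*γ + (2)*a*b*ξ = 0 := by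
    linear_combination (11/360) * h 0 (-3) + (-11/40) * h 0 (-2) + (11/8) * h 0 (-1) + (-11/8) * h 0 1 + (11/40) * h 0 2 + (-11/360) * h 0 3 + (-1/20) * h 1 (-3) + (9/20) * h 1 (-2) + (-9/4) * h 1 (-1) + (9/4) * h 1 1 + (-9/20) * h 1 2 + (1/20) * h 1 3 + (1/40) * h 2 (-3) + (-9/40) * h 2 (-2) + (9/8) * h 2 (-1) + (-9/8) * h 2 1 + (9/40) * h 2 2 + (-1/40) * h 2 3 + (-1/180) * h 3 (-3) + (1/20) * h 3 (-2) + (-1/4) * h 3 (-1) + (1/4) * h 3 1 + (-1/20) * h 3 2 + (1/180) * h 3 3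
  have C12 : -l8' + a*d^2*l8 + (2)*a*d^2*η^2 - (2/3)*a*d^2*ξ*γ + (2)*a*c*η*l9 - (2/3)*a*c*η^2*γ + (2)*a*c*ξ + (2)*a*b*d*l9 - (4/3)*a*b*d*η*γ + a*b^2 = 0 := by
    linear_combination (-11/1080) * h 0 (-3) + (11/80) * h 0 (-2) + (-11/8) * h 0 (-1) + (539/216) * h 0 0 + (-11/8) * h 0 1 + (11/80) * h 0 2 + (-11/1080) * h 0 3 + (1/60) * h 1 (-3) + (-9/40) * h 1 (-2) + (9/4) * h 1 (-1) + (-49/12) * h 1 0 + (9/4) * h 1 1 + (-9/40) * h 1 2 + (1/60) * h 1 3 + (-1/120) * h 2 (-3) + (9/80) * h 2 (-2) + (-9/8) * h 2 (-1) + (49/24) * h 2 0 + (-9/8) * h 2 1 + (9/80) * h 2 2 + (-1/120) * h 2 3 + (1/540) * h 3 (-3) + (-1/40) * h 3 (-2) + (1/4) * h 3 (-1) + (-49/108) * h 3 0 + (1/4) * h 3 1 + (-1/40) * h 3 2 + (1/540) * h 3 3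
  have ha3 : (a - 1) * (a ^ 2 + a + 1) = 0 := by linear_combination 3 * C30
  have ha1 : a = 1 := by
    rcases mul_eq_zero.mp ha3 with h' | h'
    · linarith
    · exfalso; nlinarith
  subst ha1
  have hcz : c * ((d ^ 2 * γ - c) ^ 2 + 1) = 0 := by
    linear_combination (-3/2) * C06 + (3/2) * C22 + (-3/2) * (d ^ 2 * γ - c) * C14
  have hc0 : c = 0 := by
    rcases mul_eq_zero.mp hcz with h' | h'
    · exact h'
    · exfalso; nlinarith [sq_nonneg (d ^ 2 * γ - c)]
  subst hc0
  have hd4 : (d - 1) * ((d + 1) * (d ^ 2 + 1)) = 0 := by linear_combination 3 * C14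
  have hd1 : d = 1 := by
    rcases mul_eq_zero.mp hd4 with h' | h'
    · linarith
    · rcases mul_eq_zero.mp h' with h'' | h''
      · exfalso; linarith
      · exfalso; nlinarith
  subst hd1
  have hb : b = 0 := by linear_combination (-3/8) * C05 + (9/8) * C21
  subst hb
  have hη : η = 0 := by linear_combination (3/4) * C13
  subst hη
  have hξ : ξ = 0 := by linear_combination C20
  subst hξ
  refine ⟨rfl, rfl, rfl, rfl, rfl, rfl, ?_, ?_, ?_, ?_, ?_, ?_, ?_, ?_, ?_, ?_, ?_⟩
  · intro x y; norm_num
  · linear_combination 3 * C22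
  · linear_combination -C00
  · linear_combination -C01
  · linear_combination -C02
  · linear_combination -C03
  · linear_combination -C04
  · linear_combination -C10
  · linear_combination -C11
  · linear_combination -C12
  · linear_combination -C21
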